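/- Let j ≥ 2 and k ≥ 1 be integers and set N = j^{k+1}. Then there exist at least ((j−1)!)^{k−1} distinct partitions of {1, 2, …, N} into j pairwise disjoint sets of j^k integers each, such that in each partition, for every exponent r = 1, 2, …, k, the sum of the r-th powers of the members of each set is the same for all j sets. (Two partitions are distinct if they differ as unordered families of sets.) -/

import Mathlib

open Finset

variable (j : ℕ) (σ : ℕ → ZMod j → ZMod j)

/-- class of `n` determined by digits -/
def cls (m n : ℕ) : ZMod j := ∑ i ∈ Finset.range m, σ i ((n / j ^ i % j : ℕ) : ZMod j)

def fam (m : ℕ) (c : ZMod j) : Finset ℕ :=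
  (Finset.range (j ^ m)).filter (fun n => cls j σ m n = c)

variable {j}

lemma digit_lo (hj : 2 ≤ j) {m i d a : ℕ} (ha : a < j ^ m) (him : i < m) :
    (d * j ^ m + a) / j ^ i % j = a / j ^ i % j := by
  have h1 : j ^ i ∣ j ^ m := pow_dvd_pow _ him.le
  obtain ⟨e, he⟩ := h1
  have hjpos : 0 < j ^ i := Nat.pow_pos (by omega)
  have : (d * j ^ m + a) / j ^ i = a / j ^ i + d * e := by
    rw [he, Nat.add_comm, show d * (j ^ i * e) = d * e * j ^ i by ring,
      Nat.add_mul_div_right _ _ hjpos]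
  rw [this]
  have hje : j ∣ e := by
    have : j ^ (i+1) ∣ j ^ m := pow_dvd_pow _ (by omega)
    obtain ⟨e', he'⟩ := this
    have : e = j * e' := by
      have := he'.symm.trans he
      rw [pow_succ] at this
      have hj0 : 0 < j ^ i := hjpos
      nlinarith [Nat.eq_of_mul_eq_mul_left hj0 (by linarith [this] : j ^ i * (j * e') = j ^ i * e)]
    exact ⟨e', this⟩
  obtain ⟨e', rfl⟩ := hje
  rw [show d * (j * e') = d * e' * j by ring, Nat.add_mul_mod_self_right]

lemma digit_hi (hj : 2 ≤ j) {m d a : ℕ} (ha : a < j ^ m) (hd : d < j) :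
    (d * j ^ m + a) / j ^ m % j = d := by
  have hjpos : 0 < j ^ m := Nat.pow_pos (by omega)
  rw [Nat.add_comm, Nat.add_mul_div_right _ _ hjpos, Nat.div_eq_of_lt ha]
  simpa using Nat.mod_eq_of_lt hd

lemma cls_succ (hj : 2 ≤ j) {m d a : ℕ} (ha : a < j ^ m) (hd : d < j) :
    cls j σ (m + 1) (d * j ^ m + a) = cls j σ m a + σ m d := by
  unfold cls
  rw [Finset.sum_range_succ]
  congr 1
  · exact Finset.sum_congr rfl fun i hi => by
      rw [digit_lo hj ha (Finset.mem_range.mp hi)]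
  · rw [digit_hi hj ha hd]

lemma fam_succ (hj : 2 ≤ j) (m : ℕ) (c : ZMod j) :
    fam j σ (m + 1) c =
      (Finset.range j).biUnion
        (fun d => (fam j σ m (c - σ m d)).image (fun a => d * j ^ m + a)) := by
  have hjpos : 0 < j ^ m := Nat.pow_pos (by omega)
  ext n
  simp only [fam, Finset.mem_filter, Finset.mem_range, Finset.mem_biUnion,
    Finset.mem_image]
  constructor
  · rintro ⟨hn, hc⟩
    refine ⟨n / j ^ m, ?_, n % j ^ m, ⟨⟨Nat.mod_lt _ hjpos, ?_⟩, ?_⟩⟩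
    · rw [Nat.div_lt_iff_lt_mul hjpos]
      calc n < j ^ (m+1) := hn
      _ = j * j ^ m := by ring
    · have hn' : n = n / j ^ m * j ^ m + n % j ^ m := (Nat.div_add_mod' n (j ^ m)).symm
      have hd : n / j ^ m < j := by
        rw [Nat.div_lt_iff_lt_mul hjpos]; calc n < j ^ (m+1) := hn
        _ = j * j ^ m := by ring
      have := cls_succ σ hj (Nat.mod_lt n hjpos) hd
      rw [← hn'] at this
      rw [← hc, this]; ring
    · exact Nat.div_add_mod' n (j ^ m)
  · rintro ⟨d, hd, a, ⟨⟨ha, hac⟩, rfl⟩⟩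
    constructor
    · calc d * j ^ m + a < d * j ^ m + j ^ m := by omega
      _ = (d + 1) * j ^ m := by ring
      _ ≤ j * j ^ m := Nat.mul_le_mul_right _ (by omega)
      _ = j ^ (m + 1) := by ring
    · rw [cls_succ σ hj ha hd, hac]; ring

lemma fam_disj (m : ℕ) {c c' : ZMod j} (h : c ≠ c') :
    Disjoint (fam j σ m c) (fam j σ m c') := by
  rw [Finset.disjoint_left]
  intro n hn hn'
  simp only [fam, Finset.mem_filter] at hn hn'
  exact h (hn.2 ▸ hn'.2 ▸ rfl)

lemma fam_union (hj : 2 ≤ j) (m : ℕ) :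
    haveI : NeZero j := ⟨by omega⟩
    (Finset.univ : Finset (ZMod j)).biUnion (fam j σ m) = Finset.range (j ^ m) := by
  haveI : NeZero j := ⟨by omega⟩
  ext n
  simp only [Finset.mem_biUnion, Finset.mem_univ, true_and, fam, Finset.mem_filter]
  constructor
  · rintro ⟨c, hc⟩; exact hc.1
  · intro hn; exact ⟨cls j σ m n, hn, rfl⟩

lemma fam_lt (m : ℕ) {c : ZMod j} {n : ℕ} (hn : n ∈ fam j σ m c) : n < j ^ m := by
  simpa [fam] using (Finset.mem_filter.mp hn).1

lemma piece_disj (hj : 2 ≤ j) {m : ℕ} {d d' : ℕ} (hdd : d ≠ d') (c c' : ZMod j) :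
    Disjoint ((fam j σ m c).image (fun a => d * j ^ m + a))
      ((fam j σ m c').image (fun a => d' * j ^ m + a)) := by
  rw [Finset.disjoint_left]
  rintro n hn hn'
  simp only [Finset.mem_image] at hn hn'
  obtain ⟨a, ha, rfl⟩ := hn
  obtain ⟨a', ha', he⟩ := hn'
  have h1 := fam_lt σ m ha
  have h2 := fam_lt σ m ha'
  rcases Nat.lt_trichotomy d d' with h | h | h
  · nlinarith [Nat.succ_le_of_lt h]
  · exact hdd h
  · nlinarith [Nat.succ_le_of_lt h]

lemma sum_fam_succ {M : Type*} [AddCommMonoid M] (hj : 2 ≤ j) (m : ℕ) (c : ZMod j)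
    (g : ℕ → M) :
    ∑ x ∈ fam j σ (m + 1) c, g x
      = ∑ d ∈ Finset.range j, ∑ a ∈ fam j σ m (c - σ m d), g (d * j ^ m + a) := by
  rw [fam_succ σ hj]
  rw [Finset.sum_biUnion]
  · refine Finset.sum_congr rfl fun d _ => ?_
    rw [Finset.sum_image]
    intro a _ b _ h
    simp only at h
    omega
  · intro d _ d' _ hdd
    exact piece_disj σ hj hdd _ _

lemma fam_card (hj : 2 ≤ j) (h0 : ∀ x, σ 0 x = x) :
    ∀ m, 1 ≤ m → ∀ c : ZMod j, (fam j σ m c).card = j ^ (m - 1) := by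
  haveI : NeZero j := ⟨by omega⟩
  intro m
  induction m with
  | zero => omega
  | succ m ih =>
    intro _ c
    rcases Nat.eq_zero_or_pos m with rfl | hm
    · have : fam j σ 1 c = {c.val} := by
        ext n
        simp only [fam, Finset.mem_filter, Finset.mem_range, Finset.mem_singleton, cls,
          Finset.sum_range_one, pow_zero, Nat.div_one, h0, pow_one]
        constructor
        · rintro ⟨hn, hc⟩
          rw [Nat.mod_eq_of_lt hn] at hc
          rw [← hc, ZMod.val_cast_of_lt hn]
        · rintro rfl
          refine ⟨c.val_lt, ?_⟩
          rw [Nat.mod_eq_of_lt c.val_lt, ZMod.natCast_val, ZMod.cast_id]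
      rw [this]; simp
    · have : (fam j σ (m+1) c).card = ∑ d ∈ Finset.range j, (fam j σ m (c - σ m d)).card := by
        simpa using sum_fam_succ σ hj m c (fun _ => (1 : ℕ))
      rw [this]
      have : ∀ d ∈ Finset.range j, (fam j σ m (c - σ m d)).card = j ^ (m - 1) :=
        fun d _ => ih hm _
      rw [Finset.sum_congr rfl this, Finset.sum_const, Finset.card_range, smul_eq_mul]
      have : j * j ^ (m - 1) = j ^ m := by
        conv_rhs => rw [show m = (m - 1) + 1 by omega]
        ring
      simpa using this

lemma sum_cast {M : Type*} [AddCommMonoid M] [NeZero j] (hj : 2 ≤ j) (G : ZMod j → M) :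
    ∑ d ∈ Finset.range j, G ((d : ℕ) : ZMod j) = ∑ x : ZMod j, G x := by
  haveI : NeZero j := ⟨by omega⟩
  refine Finset.sum_nbij' (fun d => ((d : ℕ) : ZMod j)) (fun x => x.val) ?_ ?_ ?_ ?_ ?_
  · intro a _; exact Finset.mem_univ _
  · intro x _; exact Finset.mem_range.mpr x.val_lt
  · intro a ha; exact ZMod.val_cast_of_lt (Finset.mem_range.mp ha)
  · intro x _; simp [ZMod.natCast_val, ZMod.cast_id]
  · intro a _; rfl

lemma fam_powsum (hj : 2 ≤ j) (h0 : ∀ x, σ 0 x = x)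
    (hbij : ∀ i, Function.Bijective (σ i)) :
    ∀ m, 1 ≤ m → ∀ r, r ≤ m - 1 → ∀ c c' : ZMod j,
      ∑ x ∈ fam j σ m c, x ^ r = ∑ x ∈ fam j σ m c', x ^ r := by
  haveI : NeZero j := ⟨by omega⟩
  intro m
  induction m with
  | zero => omega
  | succ m ih =>
    intro _ r hr c c'
    rcases Nat.eq_zero_or_pos m with rfl | hm
    · -- m + 1 = 1, r = 0
      have hr0 : r = 0 := by omega
      subst hr0
      simp only [pow_zero, Finset.sum_const, smul_eq_mul, mul_one]
      rw [fam_card σ hj h0 1 le_rfl, fam_card σ hj h0 1 le_rfl]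
    · have hrm : r ≤ m := by omega
      -- show each side equals a c-independent expression
      suffices H : ∀ e : ZMod j, ∑ x ∈ fam j σ (m+1) e, x ^ r =
          (∑ d ∈ Finset.range j, ∑ s ∈ Finset.range r,
            (∑ a ∈ fam j σ m 0, a ^ s) * ((d * j ^ m) ^ (r - s) * r.choose s)) +
          ∑ e' : ZMod j, ∑ a ∈ fam j σ m e', a ^ r by
        rw [H c, H c']
      intro e
      rw [sum_fam_succ σ hj m e (fun x => x ^ r)]
      have expand : ∀ d ∈ Finset.range j, ∑ a ∈ fam j σ m (e - σ m d), (d * j ^ m + a) ^ r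
          = (∑ s ∈ Finset.range r,
              (∑ a ∈ fam j σ m 0, a ^ s) * ((d * j ^ m) ^ (r - s) * r.choose s)) +
            ∑ a ∈ fam j σ m (e - σ m d), a ^ r := by
        intro d _
        have : ∀ a ∈ fam j σ m (e - σ m d), (d * j ^ m + a) ^ r
            = ∑ s ∈ Finset.range (r+1), a ^ s * ((d * j ^ m) ^ (r - s) * r.choose s) := by
          intro a _
          rw [add_comm (d * j ^ m) a, add_pow]
          exact Finset.sum_congr rfl fun s _ => by push_cast; ring
        rw [Finset.sum_congr rfl this, Finset.sum_comm]
        rw [Finset.sum_range_succ]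
        congr 1
        · refine Finset.sum_congr rfl fun s hs => ?_
          rw [← Finset.sum_mul]
          congr 1
          have hs' := Finset.mem_range.mp hs
          exact ih hm s (by omega : s ≤ m - 1) _ _
        · simp
      rw [Finset.sum_congr rfl expand, Finset.sum_add_distrib]
      congr 1
      have reindex : ∑ d ∈ Finset.range j, ∑ a ∈ fam j σ m (e - σ m ((d : ℕ) : ZMod j)), a ^ r
          = ∑ x : ZMod j, ∑ a ∈ fam j σ m (e - σ m x), a ^ r :=
        sum_cast hj (fun x => ∑ a ∈ fam j σ m (e - σ m x), a ^ r)
      rw [reindex]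
      have hb : Function.Bijective (fun x : ZMod j => e - σ m x) :=
        (Equiv.subLeft e).bijective.comp (hbij m)
      exact Fintype.sum_bijective _ hb _ _ (fun x => rfl)

/-- the actual partition set over ℤ, with labels -/
def pset [NeZero j] (m : ℕ) (c : ZMod j) : Finset ℤ :=
  (fam j σ m c).image (fun n : ℕ => (n : ℤ) + 1)

lemma natz_inj : Function.Injective (fun n : ℕ => (n : ℤ) + 1) := by
  intro a b h; simpa using h

def part [NeZero j] (m : ℕ) : Finset (Finset ℤ) :=
  Finset.univ.image (fun c : ZMod j => pset σ m c)

lemma pset_disj [NeZero j] (m : ℕ) {c c' : ZMod j} (h : c ≠ c') :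
    Disjoint (pset σ m c) (pset σ m c') :=
  Finset.disjoint_image natz_inj |>.mpr (fam_disj σ m h)

lemma digit_single (hj : 2 ≤ j) {v : ℕ} (hv : v < j) (i t : ℕ) :
    (v * j ^ i) / j ^ t % j = if t = i then v else 0 := by
  rcases Nat.lt_trichotomy t i with h | rfl | h
  · rw [if_neg (by omega)]
    have : v * j ^ i = v * j ^ (i - t - 1) * j * j ^ t := by
      have h2 : j ^ (i - t - 1) * j * j ^ t = j ^ i := by
        rw [← pow_succ, ← pow_add]; congr 1; omega
      rw [← h2]; ring
    rw [this, Nat.mul_div_cancel _ (Nat.pow_pos (by omega)),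
      Nat.mul_mod_left]
  · rw [if_pos rfl, Nat.mul_div_cancel _ (Nat.pow_pos (by omega)),
      Nat.mod_eq_of_lt hv]
  · rw [if_neg (by omega), Nat.div_eq_of_lt, Nat.zero_mod]
    have h1 : 0 < j ^ i := Nat.pow_pos (by omega)
    calc v * j ^ i < j ^ (i + 1) := by rw [pow_succ]; nlinarith
    _ ≤ j ^ t := Nat.pow_le_pow_right (by omega) (by omega)

lemma cls_single (hj : 2 ≤ j) (h0 : ∀ x, σ 0 x = x) (hz : ∀ i, 1 ≤ i → σ i 0 = 0)
    {v m i : ℕ} (hv : v < j) (him : i < m) :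
    cls j σ m (v * j ^ i) = σ i ((v : ℕ) : ZMod j) := by
  unfold cls
  rw [Finset.sum_eq_single i]
  · rw [digit_single hj hv, if_pos rfl]
  · intro t ht hti
    rw [digit_single hj hv, if_neg hti]
    rcases Nat.eq_zero_or_pos t with rfl | htpos
    · rw [Nat.cast_zero, h0]
    · rw [Nat.cast_zero, hz t htpos]
  · intro h; exact absurd (Finset.mem_range.mpr him) h

lemma pset_card [NeZero j] (hj : 2 ≤ j) (h0 : ∀ x, σ 0 x = x) {m : ℕ} (hm : 1 ≤ m)
    (c : ZMod j) : (pset σ m c).card = j ^ (m - 1) := by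
  rw [pset, Finset.card_image_of_injective _ natz_inj, fam_card σ hj h0 m hm]

lemma pset_nonempty [NeZero j] (hj : 2 ≤ j) (h0 : ∀ x, σ 0 x = x) {m : ℕ} (hm : 1 ≤ m)
    (c : ZMod j) : (pset σ m c).Nonempty := by
  rw [← Finset.card_pos, pset_card σ hj h0 hm]
  exact Nat.pow_pos (by omega)

lemma pset_injective [NeZero j] (hj : 2 ≤ j) (h0 : ∀ x, σ 0 x = x) {m : ℕ} (hm : 1 ≤ m) :
    Function.Injective (pset σ m) := by
  intro c c' h
  by_contra hne
  have hd := pset_disj σ m hne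
  rw [h] at hd
  exact (pset_nonempty σ hj h0 hm c').ne_empty (by simpa using disjoint_self.mp hd)

lemma part_card [NeZero j] (hj : 2 ≤ j) (h0 : ∀ x, σ 0 x = x) {m : ℕ} (hm : 1 ≤ m) :
    (part σ m).card = j := by
  rw [part, Finset.card_image_of_injective _ (pset_injective σ hj h0 hm),
    Finset.card_univ, ZMod.card]

lemma part_union [NeZero j] (hj : 2 ≤ j) (m : ℕ) :
    (part σ m).biUnion id = Finset.Icc (1 : ℤ) ((j : ℤ) ^ m) := by
  ext x
  simp only [part, pset, Finset.mem_biUnion, Finset.mem_image, Finset.mem_univ, true_and,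
    id, Finset.mem_Icc]
  constructor
  · rintro ⟨S, ⟨c, rfl⟩, hx⟩
    simp only [Finset.mem_image] at hx
    obtain ⟨n, hn, rfl⟩ := hx
    have := fam_lt σ m hn
    constructor
    · omega
    · have : (n : ℤ) + 1 ≤ ((j : ℤ)) ^ m := by
        have : ((n : ℤ)) + 1 ≤ ((j ^ m : ℕ) : ℤ) := by exact_mod_cast this
        simpa [Nat.cast_pow] using this
      exact this
  · rintro ⟨h1, h2⟩
    set n := (x - 1).toNat with hn
    have hx : x = (n : ℤ) + 1 := by omega
    have hnm : n < j ^ m := by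
      have : (n : ℤ) < ((j : ℤ)) ^ m := by omega
      exact_mod_cast (by simpa [Nat.cast_pow] using this : (n : ℤ) < ((j ^ m : ℕ) : ℤ))
    refine ⟨pset σ m (cls j σ m n), ⟨_, rfl⟩, ?_⟩
    simp only [pset, Finset.mem_image]
    exact ⟨n, by simp [fam, hnm], hx.symm⟩

lemma pset_powsum [NeZero j] (hj : 2 ≤ j) (h0 : ∀ x, σ 0 x = x)
    (hbij : ∀ i, Function.Bijective (σ i)) {m : ℕ} (hm : 1 ≤ m) {r : ℕ} (hr : r ≤ m - 1)
    (c c' : ZMod j) : ∑ x ∈ pset σ m c, x ^ r = ∑ x ∈ pset σ m c', x ^ r := by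
  suffices H : ∀ e : ZMod j, ∑ x ∈ pset σ m e, x ^ r
      = ∑ s ∈ Finset.range (r + 1),
          ((∑ a ∈ fam j σ m 0, a ^ s : ℕ) : ℤ) * ((1 : ℤ) ^ (r - s) * (r.choose s : ℤ)) by
    rw [H c, H c']
  intro e
  rw [pset, Finset.sum_image (fun a _ b _ h => natz_inj h)]
  have : ∀ n ∈ fam j σ m e, ((n : ℤ) + 1) ^ r
      = ∑ s ∈ Finset.range (r + 1), (n : ℤ) ^ s * ((1 : ℤ) ^ (r - s) * (r.choose s : ℤ)) := by
    intro n _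
    rw [add_pow]
    exact Finset.sum_congr rfl fun s _ => by ring
  rw [Finset.sum_congr rfl this, Finset.sum_comm]
  refine Finset.sum_congr rfl fun s hs => ?_
  rw [← Finset.sum_mul]
  congr 1
  have : ∑ n ∈ fam j σ m e, n ^ s = ∑ n ∈ fam j σ m 0, n ^ s :=
    fam_powsum σ hj h0 hbij m hm s (by
      have := Finset.mem_range.mp hs; omega) _ _
  push_cast [← this]
  rfl

lemma mem_pset_single [NeZero j] (hj : 2 ≤ j) (h0 : ∀ x, σ 0 x = x)
    (hz : ∀ i, 1 ≤ i → σ i 0 = 0) {v m i : ℕ} (hv : v < j) (him : i < m) :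
    ((v * j ^ i : ℕ) : ℤ) + 1 ∈ pset σ m (σ i ((v : ℕ) : ZMod j)) := by
  rw [pset, Finset.mem_image]
  refine ⟨v * j ^ i, ?_, rfl⟩
  simp only [fam, Finset.mem_filter, Finset.mem_range]
  refine ⟨?_, cls_single σ hj h0 hz hv him⟩
  have h1 : 0 < j ^ i := Nat.pow_pos (by omega)
  calc v * j ^ i < j ^ (i + 1) := by rw [pow_succ]; nlinarith
  _ ≤ j ^ m := Nat.pow_le_pow_right (by omega) (by omega)

lemma part_label_eq [NeZero j] (σ' : ℕ → ZMod j → ZMod j) (hj : 2 ≤ j)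
    (h0 : ∀ x, σ 0 x = x) (hz : ∀ i, 1 ≤ i → σ i 0 = 0)
    (h0' : ∀ x, σ' 0 x = x) (hz' : ∀ i, 1 ≤ i → σ' i 0 = 0)
    {m : ℕ} (hm : 1 ≤ m) (hpp : part σ m = part σ' m) (c : ZMod j) :
    pset σ m c = pset σ' m c := by
  have hmem : pset σ' m c ∈ part σ m := by
    rw [hpp, part]; exact Finset.mem_image_of_mem _ (Finset.mem_univ c)
  rw [part, Finset.mem_image] at hmem
  obtain ⟨e, _, he⟩ := hmem
  have key : ∀ (τ : ℕ → ZMod j → ZMod j), (∀ x, τ 0 x = x) → (∀ i, 1 ≤ i → τ i 0 = 0) →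
      ((c.val : ℤ) + 1) ∈ pset τ m c := by
    intro τ ht0 htz
    have := mem_pset_single τ hj ht0 htz (v := c.val) (i := 0) c.val_lt
      (show (0:ℕ) < m by omega)
    simpa [ZMod.natCast_val, ZMod.cast_id, ht0] using this
  have h1 : ((c.val : ℤ) + 1) ∈ pset σ m e := he ▸ key σ' h0' hz'
  have h2 : ((c.val : ℤ) + 1) ∈ pset σ m c := key σ h0 hz
  have : e = c := by
    by_contra hne
    exact Finset.disjoint_left.mp (pset_disj σ m hne) h1 h2
  rw [← he, this]

lemma sigma_recover [NeZero j] (σ' : ℕ → ZMod j → ZMod j) (hj : 2 ≤ j)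
    (h0 : ∀ x, σ 0 x = x) (hz : ∀ i, 1 ≤ i → σ i 0 = 0)
    (h0' : ∀ x, σ' 0 x = x) (hz' : ∀ i, 1 ≤ i → σ' i 0 = 0)
    {m : ℕ} (hm : 1 ≤ m) (hpp : part σ m = part σ' m)
    {i : ℕ} (hi1 : 1 ≤ i) (him : i < m) (d : ZMod j) : σ i d = σ' i d := by
  have hd : ((d.val : ℕ) : ZMod j) = d := by rw [ZMod.natCast_val, ZMod.cast_id]
  have h1 : (((d.val * j ^ i : ℕ) : ℤ) + 1) ∈ pset σ m (σ i d) := by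
    have := mem_pset_single σ hj h0 hz (v := d.val) d.val_lt him
    rwa [hd] at this
  have h2 : (((d.val * j ^ i : ℕ) : ℤ) + 1) ∈ pset σ m (σ' i d) := by
    rw [part_label_eq σ σ' hj h0 hz h0' hz' hm hpp]
    have := mem_pset_single σ' hj h0' hz' (v := d.val) d.val_lt him
    rwa [hd] at this
  by_contra hne
  exact Finset.disjoint_left.mp (pset_disj σ m hne) h1 h2

lemma card_perm0 (j : ℕ) [NeZero j] :
    Fintype.card {g : Equiv.Perm (ZMod j) // g 0 = 0} = Nat.factorial (j - 1) := by
  have e1 : {g : Equiv.Perm (ZMod j) // g 0 = 0}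
      ≃ {g : Equiv.Perm (ZMod j) // ∀ a, ¬ a ≠ 0 → g a = a} :=
    Equiv.subtypeEquivRight (fun g =>
      ⟨fun h a ha => by rw [not_not.mp ha]; exact h, fun h => h 0 (not_not.mpr rfl)⟩)
  have e2 := Equiv.Perm.subtypeEquivSubtypePerm (fun a : ZMod j => a ≠ 0)
  rw [Fintype.card_congr (e1.trans e2.symm), Fintype.card_perm]
  congr 1
  have : Fintype.card {a : ZMod j // ¬ a = 0}
      = Fintype.card (ZMod j) - Fintype.card {a : ZMod j // a = 0} :=
    Fintype.card_subtype_compl _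
  rw [Fintype.card_congr (Equiv.subtypeEquivRight (fun a : ZMod j => Iff.rfl)), this,
    Fintype.card_subtype_eq (0 : ZMod j), ZMod.card]

def sigOf (j k : ℕ) [NeZero j] (f : Fin k → {g : Equiv.Perm (ZMod j) // g 0 = 0}) :
    ℕ → ZMod j → ZMod j :=
  fun i => if h : 1 ≤ i ∧ i ≤ k then ⇑(f ⟨i - 1, by omega⟩).1 else id

lemma sigOf_h0 (j k : ℕ) [NeZero j] (f : Fin k → {g : Equiv.Perm (ZMod j) // g 0 = 0}) :
    ∀ x, sigOf j k f 0 x = x := by intro x; simp [sigOf]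

lemma sigOf_hz (j k : ℕ) [NeZero j] (f : Fin k → {g : Equiv.Perm (ZMod j) // g 0 = 0}) :
    ∀ i, 1 ≤ i → sigOf j k f i 0 = 0 := by
  intro i hi
  unfold sigOf
  split_ifs with h
  · exact (f _).2
  · rfl

lemma sigOf_bij (j k : ℕ) [NeZero j] (f : Fin k → {g : Equiv.Perm (ZMod j) // g 0 = 0}) :
    ∀ i, Function.Bijective (sigOf j k f i) := by
  intro i
  unfold sigOf
  split_ifs with h
  · exact (f _).1.bijective
  · exact Function.bijective_id

lemma sigOf_inj (j k : ℕ) [NeZero j] (hj : 2 ≤ j)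
    {f f' : Fin k → {g : Equiv.Perm (ZMod j) // g 0 = 0}}
    (h : part (sigOf j k f) (k + 1) = part (sigOf j k f') (k + 1)) : f = f' := by
  funext x
  apply Subtype.ext
  apply Equiv.ext
  intro d
  have := sigma_recover (sigOf j k f) (sigOf j k f') hj
    (sigOf_h0 j k f) (sigOf_hz j k f) (sigOf_h0 j k f') (sigOf_hz j k f')
    (by omega : 1 ≤ k + 1) h (i := x.val + 1) (by omega) (by omega) d
  unfold sigOf at this
  rw [dif_pos ⟨by omega, by omega⟩, dif_pos ⟨by omega, by omega⟩] at this
  simpa using this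

/-- **Theorem 8.** For integers `j ≥ 2` and `k ≥ 1`, with `N = j ^ (k + 1)`, there are
at least `((j-1)!)^(k-1)` distinct partitions (as unordered families of sets, encoded as
a `Finset` of partitions, each partition itself a `Finset` of `j` sets) of `{1, …, N}`
into `j` pairwise disjoint sets of `j ^ k` integers each, such that in each partition the
sums of the `r`-th powers of the members of the `j` sets agree for `r = 1, …, k`. -/
theorem prouhet_multigrade_partition_count (j k : ℕ) (hj : 2 ≤ j) (hk : 1 ≤ k) :
    ∃ Ps : Finset (Finset (Finset ℤ)),
      (Nat.factorial (j - 1)) ^ (k - 1) ≤ Ps.card ∧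
      ∀ P ∈ Ps,
        P.card = j ∧
        (∀ S ∈ P, ∀ T ∈ P, S ≠ T → Disjoint S T) ∧
        (∀ S ∈ P, S.card = j ^ k) ∧
        (P.biUnion id = Finset.Icc (1 : ℤ) ((j : ℤ) ^ (k + 1))) ∧
        (∀ r : ℕ, 1 ≤ r → r ≤ k → ∀ S ∈ P, ∀ T ∈ P,
          ∑ x ∈ S, x ^ r = ∑ x ∈ T, x ^ r) := by
  haveI : NeZero j := ⟨by omega⟩
  classical
  refine ⟨Finset.image (fun f : Fin k → {g : Equiv.Perm (ZMod j) // g 0 = 0} =>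
    part (sigOf j k f) (k + 1)) Finset.univ, ?_, ?_⟩
  · rw [Finset.card_image_of_injective _ (fun f f' h => sigOf_inj j k hj h),
      Finset.card_univ, Fintype.card_fun, card_perm0, Fintype.card_fin]
    exact Nat.pow_le_pow_right (Nat.factorial_pos _) (by omega)
  · intro P hP
    rw [Finset.mem_image] at hP
    obtain ⟨f, _, rfl⟩ := hP
    set σ := sigOf j k f with hσ
    have h0 := sigOf_h0 j k f
    have hz := sigOf_hz j k f
    have hbij := sigOf_bij j k f
    have hm : 1 ≤ k + 1 := by omega
    refine ⟨part_card σ hj h0 hm, ?_, ?_, part_union σ hj (k+1), ?_⟩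
    · intro S hS T hT hST
      rw [part, Finset.mem_image] at hS hT
      obtain ⟨c, _, rfl⟩ := hS
      obtain ⟨c', _, rfl⟩ := hT
      exact pset_disj σ (k+1) (fun hcc => hST (by rw [hcc]))
    · intro S hS
      rw [part, Finset.mem_image] at hS
      obtain ⟨c, _, rfl⟩ := hS
      rw [pset_card σ hj h0 hm]
      simp
    · intro r hr1 hrk S hS T hT
      rw [part, Finset.mem_image] at hS hT
      obtain ⟨c, _, rfl⟩ := hS
      obtain ⟨c', _, rfl⟩ := hT
      exact pset_powsum σ hj h0 hbij hm (by omega : r ≤ (k+1) - 1) c c'
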